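/- For every ν ∈ ℝ there exists a constant C > 0 such that for all y ≥ 1, the function x ↦ x^{ν−1}·exp(−y(x + 1/x)) is integrable on (0,∞) and ∫₀^∞ x^{ν−1} exp(−y(x + 1/x)) dx ≤ C·exp(−2y). In particular, for every natural number N, yᴺ·∫₀^∞ x^{ν−1} exp(−y(x + 1/x)) dx tends to 0 as y → ∞. -/

import Mathlib

open MeasureTheory Set Filter

-- auxiliary: x + 1/x ≥ 2 for x > 0
lemma aux_two_le {x : ℝ} (hx : 0 < x) : 2 ≤ x + 1 / x := by
  have h : x * (x + 1 / x - 2) = (x - 1) ^ 2 := by field_simp; ring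
  nlinarith [sq_nonneg (x - 1)]

-- continuity of the integrand on Ioi 0
lemma aux_cont (s c : ℝ) :
    ContinuousOn (fun x : ℝ => x ^ s * Real.exp (-c * (x + 1 / x))) (Ioi 0) := by
  intro x hx
  have hx0 : (0:ℝ) < x := hx
  apply ContinuousWithinAt.mul
  · exact (Real.continuousAt_rpow_const x s (Or.inl hx0.ne')).continuousWithinAt
  · apply Real.continuous_exp.continuousAt.comp_continuousWithinAt
    apply ContinuousWithinAt.mul continuousWithinAt_const
    exact continuousWithinAt_id.add
      (continuousWithinAt_const.div continuousWithinAt_id hx0.ne')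

-- the base function g x = x^s * exp (-(x + 1/x)) is integrable on (0, ∞)
lemma aux_integrable (s : ℝ) :
    IntegrableOn (fun x : ℝ => x ^ s * Real.exp (-1 * (x + 1 / x))) (Ioi 0) := by
  have h01 : IntegrableOn (fun x : ℝ => x ^ s * Real.exp (-1 * (x + 1 / x))) (Ioc 0 1) := by
    obtain ⟨n, hn⟩ := exists_nat_ge (-s)
    have hbound : ∀ x ∈ Ioc (0:ℝ) 1,
        ‖x ^ s * Real.exp (-1 * (x + 1 / x))‖ ≤ (n.factorial : ℝ) := by
      intro x hx
      obtain ⟨hx0, hx1⟩ := hx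
      have hxpos := hx0
      have h1 : Real.exp (-1 * (x + 1 / x)) ≤ Real.exp (-(1 / x)) := by
        apply Real.exp_le_exp.2
        have : 0 < 1 / x := by positivity
        nlinarith
      have h2 : Real.exp (-(1 / x)) ≤ (n.factorial : ℝ) * x ^ (n : ℝ) := by
        have ht : (0:ℝ) ≤ 1 / x := by positivity
        have := Real.pow_div_factorial_le_exp (1/x) ht n
        have hxn : x ^ (n : ℝ) = x ^ n := Real.rpow_natCast x n
        rw [Real.exp_neg, hxn]
        rw [div_le_iff₀ (by positivity)] at this
        have hinv : (1 / x) ^ n = 1 / x ^ n := by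
          rw [one_div, inv_pow, one_div]
        rw [hinv] at this
        rw [inv_le_iff_one_le_mul₀ (Real.exp_pos _)]
        calc (1:ℝ) = (1 / x ^ n) * x ^ n := by
              field_simp
          _ ≤ Real.exp (1 / x) * (n.factorial) * x ^ n := by
              apply mul_le_mul_of_nonneg_right this (by positivity)
          _ = (n.factorial) * x ^ n * Real.exp (1 / x) := by ring
      have h3 : x ^ s * ((n.factorial : ℝ) * x ^ (n : ℝ)) = (n.factorial : ℝ) * x ^ (s + n) := by
        rw [Real.rpow_add hx0]; ring
      have h4 : x ^ (s + n) ≤ 1 := by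
        apply Real.rpow_le_one hx0.le hx1
        linarith
      have hnorm : ‖x ^ s * Real.exp (-1 * (x + 1 / x))‖
          = x ^ s * Real.exp (-1 * (x + 1 / x)) := by
        apply abs_of_nonneg
        positivity
      rw [hnorm]
      calc x ^ s * Real.exp (-1 * (x + 1 / x))
          ≤ x ^ s * Real.exp (-(1 / x)) := by
            apply mul_le_mul_of_nonneg_left h1 (Real.rpow_nonneg hx0.le s)
        _ ≤ x ^ s * ((n.factorial : ℝ) * x ^ (n : ℝ)) := by
            apply mul_le_mul_of_nonneg_left h2 (Real.rpow_nonneg hx0.le s)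
        _ = (n.factorial : ℝ) * x ^ (s + n) := h3
        _ ≤ (n.factorial : ℝ) * 1 := by
            apply mul_le_mul_of_nonneg_left h4 (by positivity)
        _ = (n.factorial : ℝ) := mul_one _
    have hmeas : AEStronglyMeasurable (fun x : ℝ => x ^ s * Real.exp (-1 * (x + 1 / x)))
        (volume.restrict (Ioc 0 1)) :=
      ((aux_cont s 1).mono Ioc_subset_Ioi_self).aestronglyMeasurable measurableSet_Ioc
    apply Integrable.mono ((integrableOn_const_iff (C := (n.factorial : ℝ))).2 (Or.inr measure_Ioc_lt_top)) hmeas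
    · filter_upwards [ae_restrict_mem measurableSet_Ioc] with x hx
      rw [Real.norm_natCast]
      exact hbound x hx
  have h1inf : IntegrableOn (fun x : ℝ => x ^ s * Real.exp (-1 * (x + 1 / x))) (Ioi 1) := by
    apply integrable_of_isBigO_exp_neg (f := fun x : ℝ => x ^ s * Real.exp (-1 * (x + 1 / x)))
      (b := 1/2) (by norm_num)
    · exact (aux_cont s 1).mono (fun x hx => by simp only [mem_Ioi, mem_Ici] at hx ⊢; linarith)
    · rw [Asymptotics.isBigO_iff]
      refine ⟨1, ?_⟩
      have htend := tendsto_rpow_mul_exp_neg_mul_atTop_nhds_zero s (1/2) (by norm_num)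
      have hev : ∀ᶠ x : ℝ in atTop, x ^ s * Real.exp (-(1/2) * x) ≤ 1 := by
        filter_upwards [htend.eventually (eventually_le_nhds one_pos)] with x hx using hx
      filter_upwards [hev, eventually_ge_atTop (1:ℝ)] with x hx hx1
      have hx0 : (0:ℝ) < x := lt_of_lt_of_le one_pos hx1
      have hnorm : ‖x ^ s * Real.exp (-1 * (x + 1 / x))‖
          = x ^ s * Real.exp (-1 * (x + 1 / x)) := abs_of_nonneg (by positivity)
      rw [hnorm, Real.norm_eq_abs, abs_of_nonneg (Real.exp_pos _).le, one_mul]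
      have hsplit : Real.exp (-1 * (x + 1 / x)) ≤ Real.exp (-(1/2) * x) * Real.exp (-(1/2) * x) := by
        rw [← Real.exp_add]
        apply Real.exp_le_exp.2
        have : 0 < 1 / x := by positivity
        nlinarith
      calc x ^ s * Real.exp (-1 * (x + 1 / x))
          ≤ x ^ s * (Real.exp (-(1/2) * x) * Real.exp (-(1/2) * x)) :=
            mul_le_mul_of_nonneg_left hsplit (Real.rpow_nonneg hx0.le s)
        _ = (x ^ s * Real.exp (-(1/2) * x)) * Real.exp (-(1/2) * x) := by ring
        _ ≤ 1 * Real.exp (-(1/2) * x) :=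
            mul_le_mul_of_nonneg_right hx (Real.exp_pos _).le
        _ = Real.exp (-(1/2) * x) := one_mul _
  have : Ioc (0:ℝ) 1 ∪ Ioi 1 = Ioi 0 := Ioc_union_Ioi_eq_Ioi zero_le_one
  rw [← this]
  exact h01.union h1inf

theorem statement9 (ν : ℝ) :
    (∃ C : ℝ, 0 < C ∧ ∀ y : ℝ, 1 ≤ y →
      IntegrableOn (fun x : ℝ => x ^ (ν - 1) * Real.exp (-y * (x + 1 / x))) (Ioi 0) ∧
      (∫ x in Ioi (0 : ℝ), x ^ (ν - 1) * Real.exp (-y * (x + 1 / x)))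
        ≤ C * Real.exp (-2 * y)) ∧
    ∀ N : ℕ, Tendsto
      (fun y : ℝ => y ^ N * ∫ x in Ioi (0 : ℝ), x ^ (ν - 1) * Real.exp (-y * (x + 1 / x)))
      atTop (nhds 0) := by
  have hg := aux_integrable (ν - 1)
  set g : ℝ → ℝ := fun x => x ^ (ν - 1) * Real.exp (-1 * (x + 1 / x)) with hgdef
  set I : ℝ := ∫ x in Ioi (0:ℝ), g x with hIdef
  have hI0 : 0 ≤ I := by
    apply setIntegral_nonneg measurableSet_Ioi
    intro x hx
    have hx0 : (0:ℝ) < x := hx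
    positivity
  set C : ℝ := Real.exp 2 * (I + 1) with hCdef
  have hC : 0 < C := mul_pos (Real.exp_pos 2) (by linarith)
  -- key pointwise bound for y ≥ 1, x > 0
  have hkey : ∀ y : ℝ, 1 ≤ y → ∀ x : ℝ, 0 < x →
      x ^ (ν - 1) * Real.exp (-y * (x + 1 / x))
        ≤ (Real.exp 2 * Real.exp (-2 * y)) * g x := by
    intro y hy x hx
    have h2 : 2 ≤ x + 1 / x := aux_two_le hx
    have hexp : Real.exp (-y * (x + 1 / x))
        ≤ Real.exp 2 * Real.exp (-2 * y) * Real.exp (-1 * (x + 1 / x)) := by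
      rw [← Real.exp_add, ← Real.exp_add]
      apply Real.exp_le_exp.2
      nlinarith
    calc x ^ (ν - 1) * Real.exp (-y * (x + 1 / x))
        ≤ x ^ (ν - 1) * (Real.exp 2 * Real.exp (-2 * y) * Real.exp (-1 * (x + 1 / x))) :=
          mul_le_mul_of_nonneg_left hexp (Real.rpow_nonneg hx.le _)
      _ = (Real.exp 2 * Real.exp (-2 * y)) * g x := by rw [hgdef]; ring
  have hmain : ∀ y : ℝ, 1 ≤ y →
      IntegrableOn (fun x : ℝ => x ^ (ν - 1) * Real.exp (-y * (x + 1 / x))) (Ioi 0) ∧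
      (∫ x in Ioi (0 : ℝ), x ^ (ν - 1) * Real.exp (-y * (x + 1 / x)))
        ≤ C * Real.exp (-2 * y) := by
    intro y hy
    have hint : IntegrableOn (fun x : ℝ => x ^ (ν - 1) * Real.exp (-y * (x + 1 / x))) (Ioi 0) := by
      have hgc : IntegrableOn (fun x => (Real.exp 2 * Real.exp (-2 * y)) * g x) (Ioi 0) :=
        hg.const_mul _
      apply Integrable.mono hgc
      · exact ((aux_cont (ν - 1) y)).aestronglyMeasurable measurableSet_Ioi
      · filter_upwards [ae_restrict_mem measurableSet_Ioi] with x hx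
        have hx0 : (0:ℝ) < x := hx
        have h1 : ‖x ^ (ν - 1) * Real.exp (-y * (x + 1 / x))‖
            = x ^ (ν - 1) * Real.exp (-y * (x + 1 / x)) := abs_of_nonneg (by positivity)
        have h2 : ‖(Real.exp 2 * Real.exp (-2 * y)) * g x‖
            = (Real.exp 2 * Real.exp (-2 * y)) * g x := by
          apply abs_of_nonneg
          rw [hgdef]
          positivity
        rw [h1, h2]
        exact hkey y hy x hx0
    refine ⟨hint, ?_⟩
    have hle : (∫ x in Ioi (0 : ℝ), x ^ (ν - 1) * Real.exp (-y * (x + 1 / x)))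
        ≤ ∫ x in Ioi (0:ℝ), (Real.exp 2 * Real.exp (-2 * y)) * g x := by
      apply setIntegral_mono_on hint (hg.const_mul _) measurableSet_Ioi
      intro x hx
      exact hkey y hy x hx
    have heq : (∫ x in Ioi (0:ℝ), (Real.exp 2 * Real.exp (-2 * y)) * g x)
        = (Real.exp 2 * Real.exp (-2 * y)) * I := by
      rw [hIdef, ← integral_const_mul]
    rw [heq] at hle
    calc (∫ x in Ioi (0 : ℝ), x ^ (ν - 1) * Real.exp (-y * (x + 1 / x)))
        ≤ (Real.exp 2 * Real.exp (-2 * y)) * I := hle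
      _ ≤ C * Real.exp (-2 * y) := by
          rw [hCdef]
          have := Real.exp_pos (-2 * y)
          nlinarith [Real.exp_pos (2:ℝ)]
  refine ⟨⟨C, hC, hmain⟩, ?_⟩
  intro N
  have htend : Tendsto (fun y : ℝ => y ^ N * (C * Real.exp (-2 * y))) atTop (nhds 0) := by
    have h1 := tendsto_rpow_mul_exp_neg_mul_atTop_nhds_zero (N : ℝ) 2 (by norm_num)
    have h2 : Tendsto (fun y : ℝ => C * (y ^ (N : ℝ) * Real.exp (-2 * y))) atTop (nhds (C * 0)) :=
      h1.const_mul C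
    rw [mul_zero] at h2
    apply h2.congr'
    filter_upwards [eventually_gt_atTop (0:ℝ)] with y hy
    rw [Real.rpow_natCast]
    ring
  apply squeeze_zero' (g := fun y : ℝ => y ^ N * (C * Real.exp (-2 * y))) ?_ ?_ htend
  · filter_upwards [eventually_ge_atTop (1:ℝ)] with y hy
    have hynn : (0:ℝ) ≤ y ^ N := pow_nonneg (by linarith) N
    apply mul_nonneg hynn
    apply setIntegral_nonneg measurableSet_Ioi
    intro x hx
    have hx0 : (0:ℝ) < x := hx
    positivity
  · filter_upwards [eventually_ge_atTop (1:ℝ)] with y hy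
    have hynn : (0:ℝ) ≤ y ^ N := pow_nonneg (by linarith) N
    exact mul_le_mul_of_nonneg_left (hmain y hy).2 hynn
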